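/- Let F : ℝ^d → ℝ satisfy: F is C³ with lim_{|x|→∞} F(x) = ∞, and there are constants a₁, a₂, c₁, c₂, c₃, c₄ > 0 with a₂ < 2a₁ − 2 such that for all x ∈ ℝ^d: c₁|x|^{a₁} − c₂ ≤ |∇F(x)|² ≤ c₃|x|^{a₂} + c₄ and c₁|x|^{a₁} − c₂ ≤ (|∇F(x)| − 2ΔF(x))² ≤ c₃|x|^{a₂} + c₄. Then there exist constants c̃₁, c̃₂, c̃₃, c̃₄ > 0 such that for all x ∈ ℝ^d, c̃₁|x|^{ã₁} − c̃₂ ≤ |F(x)| ≤ c̃₃|x|^{ã₂} + c̃₄, where ã₁ = a₁/2 + 1 and ã₂ = a₂/2 + 1. -/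

import Mathlib

set_option maxHeartbeats 1000000

open MeasureTheory Filter Real Topology

/-- Ekeland-type variational principle for a continuous function bounded below
on a complete normed space. -/
theorem my_ekeland {E : Type*} [NormedAddCommGroup E] [CompleteSpace E]
    (F : E → ℝ) (hF : Continuous F) (m : ℝ) (hm : ∀ z, m ≤ F z)
    {lam : ℝ} (hlam : 0 < lam) (x : E) :
    ∃ y, lam * ‖y - x‖ ≤ F x - F y ∧ ∀ z, F y ≤ F z + lam * ‖z - y‖ := by
  set S : E → Set E := fun y => {z | F z + lam * ‖z - y‖ ≤ F y} with hS
  have hself : ∀ y, y ∈ S y := by intro y; simp [hS]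
  have hstep : ∀ (n : ℕ) (y : E), ∃ y', y' ∈ S y ∧ ∀ z ∈ S y, F y' ≤ F z + (1/2) ^ n := by
    intro n y
    have hne : (F '' S y).Nonempty := ⟨F y, y, hself y, rfl⟩
    have hbd : BddBelow (F '' S y) := ⟨m, by rintro _ ⟨z, -, rfl⟩; exact hm z⟩
    have : sInf (F '' S y) < sInf (F '' S y) + (1/2) ^ n := lt_add_of_pos_right _ (by positivity)
    obtain ⟨_, ⟨y', hy', rfl⟩, hlt⟩ := exists_lt_of_csInf_lt hne this
    exact ⟨y', hy', fun z hz => hlt.le.trans (by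
      have := csInf_le hbd ⟨z, hz, rfl⟩; linarith)⟩
  choose u hu1 hu2 using hstep
  set y : ℕ → E := fun n => Nat.rec x (fun n yn => u n yn) n with hy
  have hysucc : ∀ n, y (n + 1) = u n (y n) := fun n => rfl
  have h1 : ∀ n, F (y (n+1)) + lam * ‖y (n+1) - y n‖ ≤ F (y n) := by
    intro n; rw [hysucc]; exact hu1 n (y n)
  have hmono : ∀ n k, lam * ‖y (n+k) - y n‖ ≤ F (y n) - F (y (n+k)) := by
    intro n k
    induction k with
    | zero => simp
    | succ k ih =>
      have h2 := h1 (n + k)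
      have htri : ‖y (n+(k+1)) - y n‖ ≤ ‖y (n+k+1) - y (n+k)‖ + ‖y (n+k) - y n‖ := by
        rw [show n + (k+1) = n + k + 1 by ring]
        simpa using norm_sub_le_norm_sub_add_norm_sub (y (n+k+1)) (y (n+k)) (y n)
      have := mul_le_mul_of_nonneg_left htri hlam.le
      rw [show n + (k+1) = n + k + 1 by ring] at *
      nlinarith [norm_nonneg (y (n+k+1) - y (n+k))]
  have hanti : Antitone (fun n => F (y n)) := by
    apply antitone_nat_of_succ_le
    intro n
    have := h1 n
    nlinarith [norm_nonneg (y (n+1) - y n), hlam]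
  have hbdd : BddBelow (Set.range fun n => F (y n)) := ⟨m, by rintro _ ⟨n, rfl⟩; exact hm _⟩
  have hFconv : Tendsto (fun n => F (y n)) atTop (𝓝 (⨅ n, F (y n))) :=
    tendsto_atTop_ciInf hanti hbdd
  set L := ⨅ n, F (y n) with hL
  have hLle : ∀ n, L ≤ F (y n) := fun n => ciInf_le hbdd n
  have hcauchy : CauchySeq y := by
    rw [Metric.cauchySeq_iff']
    intro ε hε
    obtain ⟨N, hN⟩ := (hFconv.eventually (gt_mem_nhds (lt_add_of_pos_right L
      (by positivity : (0:ℝ) < lam * ε)))).exists_forall_of_atTop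
    refine ⟨N, fun n hn => ?_⟩
    obtain ⟨k, rfl⟩ := Nat.exists_eq_add_of_le hn
    have h2 := hmono N k
    have h3 := hN N le_rfl
    have h4 := hLle (N + k)
    rw [dist_eq_norm]
    nlinarith
  obtain ⟨yl, hyl⟩ := cauchySeq_tendsto_of_complete hcauchy
  have hFyl : Tendsto (fun n => F (y n)) atTop (𝓝 (F yl)) :=
    (hF.tendsto yl).comp hyl
  have hLeq : L = F yl := tendsto_nhds_unique hFconv hFyl
  have hkey : ∀ n, lam * ‖yl - y n‖ ≤ F (y n) - F yl := by
    intro n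
    have t1 : Tendsto (fun k => lam * ‖y (n+k) - y n‖) atTop (𝓝 (lam * ‖yl - y n‖)) := by
      have := (((hyl.comp (tendsto_add_atTop_nat n)).sub_const (y n)).norm).const_mul lam
      simpa [Function.comp, Nat.add_comm] using this
    have t2 : Tendsto (fun k => F (y n) - F (y (n+k))) atTop (𝓝 (F (y n) - F yl)) :=
      tendsto_const_nhds.sub (by simpa [Function.comp_def, Nat.add_comm] using hFyl.comp (tendsto_add_atTop_nat n))
    exact le_of_tendsto_of_tendsto' t1 t2 (fun k => hmono n k)
  have hx0 : y 0 = x := rfl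
  refine ⟨yl, by simpa [hx0] using hkey 0, ?_⟩
  intro z
  by_contra hcon
  push_neg at hcon
  have hzS : ∀ n, z ∈ S (y n) := by
    intro n
    have htri : ‖z - y n‖ ≤ ‖z - yl‖ + ‖yl - y n‖ :=
      norm_sub_le_norm_sub_add_norm_sub z yl (y n)
    have := hkey n
    have := mul_le_mul_of_nonneg_left htri hlam.le
    simp only [hS, Set.mem_setOf_eq]
    nlinarith
  have hz2 : ∀ n, F (y (n+1)) ≤ F z + (1/2) ^ n := by
    intro n; rw [hysucc]; exact hu2 n (y n) z (hzS n)
  have : F yl ≤ F z := by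
    have t1 : Tendsto (fun n => F (y (n+1))) atTop (𝓝 (F yl)) :=
      by simpa [Function.comp_def] using hFyl.comp (tendsto_add_atTop_nat 1)
    have t2 : Tendsto (fun n => F z + (1/2 : ℝ) ^ n) atTop (𝓝 (F z + 0)) :=
      tendsto_const_nhds.add (tendsto_pow_atTop_nhds_zero_of_lt_one (by norm_num) (by norm_num))
    have := le_of_tendsto_of_tendsto' t1 t2 hz2
    simpa using this
  nlinarith [norm_nonneg (z - yl), mul_nonneg hlam.le (norm_nonneg (z - yl))]

/-- At an Ekeland point, the derivative is small. -/
theorem my_ekeland_fderiv {E : Type*} [NormedAddCommGroup E] [NormedSpace ℝ E]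
    (F : E → ℝ) (hF : Differentiable ℝ F)
    {lam : ℝ} (hlam : 0 < lam) (x : E)
    (hmin : ∀ z, F x ≤ F z + lam * ‖z - x‖) : ‖fderiv ℝ F x‖ ≤ lam := by
  have key : ∀ v : E, -(lam * ‖v‖) ≤ fderiv ℝ F x v := by
    intro v
    have hline : HasDerivAt (fun t : ℝ => x + t • v) v 0 := by
      simpa using ((hasDerivAt_id (0:ℝ)).smul_const v).const_add x
    have hg : HasDerivAt (fun t : ℝ => F (x + t • v)) (fderiv ℝ F x v) 0 := by
      have h0 : HasFDerivAt F (fderiv ℝ F x) (x + (0:ℝ) • v) := by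
        simpa using (hF x).hasFDerivAt
      exact h0.comp_hasDerivAt 0 hline
    have hslope := hasDerivAt_iff_tendsto_slope.mp hg
    have hslope' : Tendsto (slope (fun t : ℝ => F (x + t • v)) 0) (𝓝[>] 0)
        (𝓝 (fderiv ℝ F x v)) :=
      hslope.mono_left (nhdsWithin_mono 0 (fun t ht => ne_of_gt ht))
    refine ge_of_tendsto hslope' ?_
    filter_upwards [self_mem_nhdsWithin] with t (ht : 0 < t)
    have h2 := hmin (x + t • v)
    have h3 : ‖x + t • v - x‖ = t * ‖v‖ := by
      simp [norm_smul, abs_of_pos ht]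
    rw [h3] at h2
    have hgoal : -(lam * ‖v‖) ≤ (F (x + t • v) - F (x + (0:ℝ) • v)) / (t - 0) := by
      rw [sub_zero, le_div_iff₀ ht]
      simp only [zero_smul, add_zero]
      nlinarith
    simpa [slope_def_field] using hgoal
  refine (fderiv ℝ F x).opNorm_le_bound hlam.le (fun v => ?_)
  rw [Real.norm_eq_abs, abs_le]
  constructor
  · simpa using key v
  · have := key (-v)
    simp only [map_neg, norm_neg] at this
    linarith

theorem my_sqrt_add_le (a b : ℝ) (ha : 0 ≤ a) (hb : 0 ≤ b) :
    Real.sqrt (a + b) ≤ Real.sqrt a + Real.sqrt b := by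
  have h : a + b ≤ (Real.sqrt a + Real.sqrt b)^2 := by
    nlinarith [Real.sq_sqrt ha, Real.sq_sqrt hb, Real.sqrt_nonneg a, Real.sqrt_nonneg b,
      mul_nonneg (Real.sqrt_nonneg a) (Real.sqrt_nonneg b)]
  calc Real.sqrt (a + b) ≤ Real.sqrt ((Real.sqrt a + Real.sqrt b)^2) := Real.sqrt_le_sqrt h
    _ = Real.sqrt a + Real.sqrt b := Real.sqrt_sq (by positivity)


noncomputable def lap {d : ℕ} (f : EuclideanSpace ℝ (Fin d) → ℝ)
    (x : EuclideanSpace ℝ (Fin d)) : ℝ :=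
  ∑ i, fderiv ℝ (fun y => fderiv ℝ f y (EuclideanSpace.single i 1)) x
    (EuclideanSpace.single i 1)

theorem stmt_0 {d : ℕ} (F : EuclideanSpace ℝ (Fin d) → ℝ)
    (hF : ContDiff ℝ 3 F)
    (hlim : Tendsto F (cocompact (EuclideanSpace ℝ (Fin d))) atTop)
    (a₁ a₂ c₁ c₂ c₃ c₄ : ℝ)
    (ha₁ : 0 < a₁) (ha₂ : 0 < a₂) (hc₁ : 0 < c₁) (hc₂ : 0 < c₂)
    (hc₃ : 0 < c₃) (hc₄ : 0 < c₄) (hgap : a₂ < 2 * a₁ - 2)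
    (hgrad_lo : ∀ x, c₁ * ‖x‖ ^ a₁ - c₂ ≤ ‖gradient F x‖ ^ 2)
    (hgrad_hi : ∀ x, ‖gradient F x‖ ^ 2 ≤ c₃ * ‖x‖ ^ a₂ + c₄)
    (hlap_lo : ∀ x, c₁ * ‖x‖ ^ a₁ - c₂ ≤ (‖gradient F x‖ - 2 * lap F x) ^ 2)
    (hlap_hi : ∀ x, (‖gradient F x‖ - 2 * lap F x) ^ 2 ≤ c₃ * ‖x‖ ^ a₂ + c₄) :
    ∃ C₁ C₂ C₃ C₄ : ℝ, 0 < C₁ ∧ 0 < C₂ ∧ 0 < C₃ ∧ 0 < C₄ ∧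
      ∀ x, C₁ * ‖x‖ ^ (a₁ / 2 + 1) - C₂ ≤ |F x| ∧
        |F x| ≤ C₃ * ‖x‖ ^ (a₂ / 2 + 1) + C₄ := by
  have hdiff : Differentiable ℝ F := hF.differentiable (by norm_num)
  have hcont : Continuous F := hF.continuous
  have hng : ∀ z, ‖fderiv ℝ F z‖ = ‖gradient F z‖ := fun z =>
    ((InnerProductSpace.toDual ℝ (EuclideanSpace ℝ (Fin d))).symm.norm_map (fderiv ℝ F z)).symm
  obtain ⟨x₀, hx₀⟩ := hcont.exists_forall_le hlim
  set m := F x₀ with hm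
  have h2pos : (0:ℝ) < (2:ℝ) ^ (-a₁) := Real.rpow_pos_of_pos two_pos _
  set A := c₁ * (2:ℝ) ^ (-a₁) with hA
  have hApos : 0 < A := mul_pos hc₁ h2pos
  set R := max 1 ((2*c₂/A) ^ a₁⁻¹) with hR
  have hR1 : (1:ℝ) ≤ R := le_max_left _ _
  have hR0 : (0:ℝ) < R := lt_of_lt_of_le one_pos hR1
  set e₁ := a₁/2 + 1 with he₁
  set e₂ := a₂/2 + 1 with he₂
  have he₁pos : 0 < e₁ := by rw [he₁]; linarith
  have he₂pos : 0 < e₂ := by rw [he₂]; linarith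
  set K₁ := Real.sqrt (A/8) with hK₁
  have hK₁pos : 0 < K₁ := Real.sqrt_pos.mpr (by positivity)
  have hKRpos : 0 ≤ K₁ * R ^ e₁ := by positivity
  refine ⟨K₁, |m| + 1 + K₁ * R ^ e₁, Real.sqrt c₃ + Real.sqrt c₄,
    Real.sqrt c₄ + |F 0| + 1, hK₁pos, by positivity,
    add_pos (Real.sqrt_pos.mpr hc₃) (Real.sqrt_pos.mpr hc₄), by positivity, ?_⟩
  intro x
  constructor
  · -- lower bound
    rcases le_or_gt ‖x‖ R with hle | hgt
    · have h1 : K₁ * ‖x‖ ^ e₁ ≤ K₁ * R ^ e₁ :=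
        mul_le_mul_of_nonneg_left (Real.rpow_le_rpow (norm_nonneg x) hle he₁pos.le) hK₁pos.le
      have h2 := abs_nonneg (F x)
      have h3 := abs_nonneg m
      linarith
    · set r := ‖x‖ with hr'
      have hr1 : 1 < r := lt_of_le_of_lt hR1 hgt
      have hr0 : 0 < r := by linarith
      set ε := F x - m + 1 with hε'
      have hε1 : 1 ≤ ε := by have := hx₀ x; rw [hε']; linarith
      have hεpos : 0 < ε := by linarith
      set lam := 2*ε/r with hlam'
      have hlampos : 0 < lam := by positivity
      obtain ⟨y, hy1, hy2⟩ := my_ekeland F hcont m hx₀ hlampos x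
      have hfd : ‖fderiv ℝ F y‖ ≤ lam := my_ekeland_fderiv F hdiff hlampos y hy2
      have hFy : m ≤ F y := hx₀ y
      have hdistle : ‖y - x‖ ≤ r/2 := by
        have h2 : lam * ‖y - x‖ ≤ ε := by linarith
        rw [hlam', div_mul_eq_mul_div, div_le_iff₀ hr0] at h2
        nlinarith
      have hny : r/2 ≤ ‖y‖ := by
        have h1 := norm_sub_norm_le x y
        have hxy : ‖x - y‖ = ‖y - x‖ := norm_sub_rev x y
        have : ‖x‖ = r := rfl
        linarith
      have hglam : ‖gradient F y‖ ^ 2 ≤ lam ^ 2 := by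
        have h1 := pow_le_pow_left₀ (norm_nonneg (fderiv ℝ F y)) hfd 2
        rwa [hng y] at h1
      have hyr : (r/2) ^ a₁ ≤ ‖y‖ ^ a₁ := Real.rpow_le_rpow (by positivity) hny ha₁.le
      have hAr : A * r ^ a₁ = c₁ * (r/2) ^ a₁ := by
        rw [hA, Real.div_rpow hr0.le (by norm_num : (0:ℝ) ≤ 2),
          Real.rpow_neg (by norm_num : (0:ℝ) ≤ 2)]
        field_simp
      have hkey1 : A * r ^ a₁ - c₂ ≤ lam ^ 2 := by
        have h1 : c₁ * (r/2)^a₁ ≤ c₁ * ‖y‖^a₁ := mul_le_mul_of_nonneg_left hyr hc₁.le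
        have h2 := hgrad_lo y
        calc A * r^a₁ - c₂ = c₁*(r/2)^a₁ - c₂ := by rw [hAr]
          _ ≤ c₁*‖y‖^a₁ - c₂ := by linarith
          _ ≤ ‖gradient F y‖^2 := h2
          _ ≤ lam^2 := hglam
      have hra : 2*c₂/A ≤ r ^ a₁ := by
        have h1 : (2*c₂/A) ^ a₁⁻¹ ≤ r := le_of_lt (lt_of_le_of_lt (le_max_right _ _) hgt)
        have h2 := Real.rpow_le_rpow (Real.rpow_nonneg (by positivity) _) h1 ha₁.le
        rwa [Real.rpow_inv_rpow (by positivity) ha₁.ne'] at h2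
      have hc₂le : c₂ ≤ A * r ^ a₁ / 2 := by
        rw [div_le_iff₀ hApos] at hra
        linarith
      have hlamsq : lam ^ 2 = 4 * ε^2 / r^2 := by rw [hlam']; field_simp; ring
      have hmain : A/8 * r ^ (a₁ + 2) ≤ ε ^ 2 := by
        have hsplit : r ^ (a₁+2) = r^a₁ * r^2 := by
          rw [Real.rpow_add hr0, show (2:ℝ) = ((2:ℕ):ℝ) by norm_num, Real.rpow_natCast]
        have hk2 : A * r^a₁ - c₂ ≤ 4*ε^2/r^2 := hlamsq ▸ hkey1
        have h4 : A * r^a₁ / 2 ≤ 4*ε^2/r^2 := by linarith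
        rw [le_div_iff₀ (by positivity : (0:ℝ) < r^2)] at h4
        have heq : A/8 * (r^a₁ * r^2) = (A * r^a₁ / 2 * r^2)/4 := by ring
        rw [hsplit, heq]
        linarith
      have hfin : K₁ * r ^ e₁ ≤ ε := by
        have h5 : Real.sqrt (A/8 * r^(a₁+2)) ≤ Real.sqrt (ε^2) := Real.sqrt_le_sqrt hmain
        rw [Real.sqrt_sq hεpos.le, Real.sqrt_mul (by positivity) _] at h5
        have h6 : Real.sqrt (r ^ (a₁+2)) = r ^ e₁ := by
          rw [Real.sqrt_eq_rpow, ← Real.rpow_mul hr0.le, he₁]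
          norm_num
          ring_nf
        rw [h6] at h5
        exact h5
      have h7 : K₁ * r ^ e₁ - (|m| + 1 + K₁ * R ^ e₁) ≤ F x := by
        have hm' : -|m| ≤ m := neg_abs_le m
        linarith
      exact h7.trans (le_abs_self _)
  · -- upper bound
    have hbound : ∀ y ∈ Metric.closedBall (0 : EuclideanSpace ℝ (Fin d)) ‖x‖,
        ‖fderiv ℝ F y‖ ≤ Real.sqrt c₃ * ‖x‖ ^ (a₂/2) + Real.sqrt c₄ := by
      intro y hy
      rw [Metric.mem_closedBall, dist_zero_right] at hy
      have h1 : ‖gradient F y‖^2 ≤ c₃ * ‖x‖^a₂ + c₄ := by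
        have h2 := Real.rpow_le_rpow (norm_nonneg y) hy ha₂.le
        have := hgrad_hi y
        nlinarith
      have h2 : ‖fderiv ℝ F y‖ ≤ Real.sqrt (c₃ * ‖x‖^a₂ + c₄) := by
        rw [hng y]
        have h3 := Real.sqrt_le_sqrt h1
        rwa [Real.sqrt_sq (norm_nonneg _)] at h3
      refine h2.trans ?_
      have h3 := my_sqrt_add_le (c₃ * ‖x‖^a₂) c₄ (by positivity) hc₄.le
      have h4 : Real.sqrt (c₃ * ‖x‖^a₂) = Real.sqrt c₃ * ‖x‖^(a₂/2) := by
        rw [Real.sqrt_mul hc₃.le]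
        congr 1
        rw [show a₂/2 = a₂ * (1/2) by ring, Real.rpow_mul (norm_nonneg x), ← Real.sqrt_eq_rpow]
      linarith
    have hmv : ‖F x - F 0‖ ≤ (Real.sqrt c₃ * ‖x‖^(a₂/2) + Real.sqrt c₄) * ‖x - 0‖ :=
      (convex_closedBall (0 : EuclideanSpace ℝ (Fin d)) ‖x‖).norm_image_sub_le_of_norm_fderiv_le
        (fun y _ => hdiff y) hbound
        (Metric.mem_closedBall_self (norm_nonneg x))
        (by simp [Metric.mem_closedBall])
    rw [sub_zero] at hmv
    have habs : |F x| ≤ |F x - F 0| + |F 0| := by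
      have := abs_sub_abs_le_abs_sub (F x) (F 0)
      linarith
    have hmul : ‖x‖^(a₂/2) * ‖x‖ ≤ ‖x‖ ^ e₂ := by
      rcases eq_or_ne ‖x‖ 0 with h0 | h0
      · rw [h0]
        simp [Real.rpow_nonneg]
      · rw [he₂, Real.rpow_add_one h0]
    have hXle : ‖x‖ ≤ ‖x‖ ^ e₂ + 1 := by
      rcases le_or_gt ‖x‖ 1 with h1 | h1
      · have := Real.rpow_nonneg (norm_nonneg x) e₂
        linarith
      · have h2 : ‖x‖ ^ (1:ℝ) ≤ ‖x‖ ^ e₂ :=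
          Real.rpow_le_rpow_of_exponent_le h1.le (by rw [he₂]; linarith)
        rw [Real.rpow_one] at h2
        linarith
    have hX0 : 0 ≤ ‖x‖ ^ e₂ := Real.rpow_nonneg (norm_nonneg x) e₂
    have hrn : ‖F x - F 0‖ = |F x - F 0| := rfl
    rw [hrn] at hmv
    have hs3 : 0 ≤ Real.sqrt c₃ := Real.sqrt_nonneg _
    have hs4 : 0 ≤ Real.sqrt c₄ := Real.sqrt_nonneg _
    nlinarith [norm_nonneg x, abs_nonneg (F 0),
      mul_le_mul_of_nonneg_left hmul hs3, mul_le_mul_of_nonneg_left hXle hs4]
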